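/- arXiv:2411.19801 — 7 statements merged into one kernel-verified Lean document; each statement's English description precedes it below -/
import Mathlib

section
/- Let 𝒢 be a class of graphs closed under subgraphs such that every G ∈ 𝒢 satisfies e(H) ≤ m₁·v(H) for all subgraphs H and e(H) ≤ m₂·v(H) for all bipartite subgraphs H, with m₁ ≤ 2m₂. If G ∈ 𝒢 and 1 ≤ t ≤ ⌊2m₁⌋, then the disjoint union G ∪ K_t also satisfies both density conditions. -/
open Finset in
lemma aux_bip {W : Type*} [Fintype W] (Γ : SimpleGraph W) (hc : Γ.Colorable 2) :
    (Γ.edgeSet.ncard : ℝ) ≤ (Fintype.card W : ℝ)^2 / 4 := by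
  classical
  obtain ⟨C⟩ := hc
  set S : Finset W := univ.filter (fun v => C v = 0) with hS
  have hdart : Fintype.card Γ.Dart = 2 * Γ.edgeFinset.card :=
    Γ.dart_card_eq_twice_card_edges
  have h01 : ∀ x : Fin 2, x = 0 ∨ x = 1 := by decide
  have hinj : Fintype.card Γ.Dart ≤ (S ×ˢ Sᶜ ∪ Sᶜ ×ˢ S).card := by
    rw [← Finset.card_univ]
    apply Finset.card_le_card_of_injOn (fun d => d.toProd)
    · intro d _
      have hv := C.valid d.adj
      simp only [Finset.mem_union, Finset.mem_product, Finset.mem_compl, hS,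
        Finset.mem_filter, Finset.mem_univ, true_and]
      rcases h01 (C d.fst) with h1 | h1 <;> rcases h01 (C d.snd) with h2 | h2 <;>
        simp_all
    · intro a _ b _ h
      exact SimpleGraph.Dart.ext a b h
  have hcard : S.card + Sᶜ.card = Fintype.card W := S.card_add_card_compl
  have hle : 2 * Γ.edgeFinset.card ≤ S.card * Sᶜ.card + Sᶜ.card * S.card := by
    calc 2 * Γ.edgeFinset.card = Fintype.card Γ.Dart := hdart.symm
    _ ≤ (S ×ˢ Sᶜ ∪ Sᶜ ×ˢ S).card := hinj
    _ ≤ (S ×ˢ Sᶜ).card + (Sᶜ ×ˢ S).card := Finset.card_union_le _ _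
    _ = S.card * Sᶜ.card + Sᶜ.card * S.card := by rw [Finset.card_product, Finset.card_product]
  have hE : Γ.edgeSet.ncard = Γ.edgeFinset.card := by
    simp [Set.ncard_eq_toFinset_card', SimpleGraph.edgeFinset]
  rw [hE]
  have h1 : 2 * (Γ.edgeFinset.card : ℝ) ≤ (S.card : ℝ) * Sᶜ.card + (Sᶜ.card : ℝ) * S.card := by
    exact_mod_cast hle
  have h2 : (S.card : ℝ) + Sᶜ.card = Fintype.card W := by exact_mod_cast hcard
  nlinarith [sq_nonneg ((S.card : ℝ) - Sᶜ.card)]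

lemma aux_complete {W : Type*} [Fintype W] (Γ : SimpleGraph W) :
    2 * Γ.edgeSet.ncard ≤ Fintype.card W * Fintype.card W := by
  classical
  have hE : Γ.edgeSet.ncard = Γ.edgeFinset.card := by
    simp [Set.ncard_eq_toFinset_card', SimpleGraph.edgeFinset]
  have h1 : Γ.edgeFinset.card ≤ (Fintype.card W).choose 2 :=
    Γ.card_edgeFinset_le_card_choose_two
  have h2 : ∀ n : ℕ, 2 * n.choose 2 ≤ n * n := by
    intro n
    induction n with
    | zero => simp
    | succ n ih =>
      rw [Nat.choose_succ_succ]
      have : n.choose 1 = n := Nat.choose_one_right n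
      nlinarith
  rw [hE]
  calc 2 * Γ.edgeFinset.card ≤ 2 * (Fintype.card W).choose 2 := by omega
  _ ≤ _ := h2 _

section Aux

variable {V : Type*} [Fintype V] {G : SimpleGraph V} {t : ℕ}

/-- Left part of a subgraph of a disjoint sum. -/
def leftPart (H : (G ⊕g (⊤ : SimpleGraph (Fin t))).Subgraph) : G.Subgraph where
  verts := Sum.inl ⁻¹' H.verts
  Adj x y := H.Adj (.inl x) (.inl y)
  adj_sub h := H.adj_sub h
  edge_vert h := H.edge_vert h
  symm := ⟨fun x y h => H.adj_symm h⟩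

/-- Right part of a subgraph of a disjoint sum. -/
def rightPart (H : (G ⊕g (⊤ : SimpleGraph (Fin t))).Subgraph) :
    (⊤ : SimpleGraph (Fin t)).Subgraph where
  verts := Sum.inr ⁻¹' H.verts
  Adj x y := H.Adj (.inr x) (.inr y)
  adj_sub h := H.adj_sub h
  edge_vert h := H.edge_vert h
  symm := ⟨fun x y h => H.adj_symm h⟩

lemma verts_eq (H : (G ⊕g (⊤ : SimpleGraph (Fin t))).Subgraph) :
    H.verts = Sum.inl '' (leftPart H).verts ∪ Sum.inr '' (rightPart H).verts := by
  ext x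
  cases x <;> simp [leftPart, rightPart]

lemma verts_ncard (H : (G ⊕g (⊤ : SimpleGraph (Fin t))).Subgraph) :
    H.verts.ncard = (leftPart H).verts.ncard + (rightPart H).verts.ncard := by
  rw [verts_eq H, Set.ncard_union_eq ?_ (Set.toFinite _) (Set.toFinite _),
    Set.ncard_image_of_injective _ Sum.inl_injective,
    Set.ncard_image_of_injective _ Sum.inr_injective]
  rw [Set.disjoint_left]
  rintro a ⟨x, -, rfl⟩ ⟨y, -, h⟩
  exact absurd h (by simp)

lemma edgeSet_eq (H : (G ⊕g (⊤ : SimpleGraph (Fin t))).Subgraph) :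
    H.edgeSet = Sym2.map Sum.inl '' (leftPart H).edgeSet ∪
      Sym2.map Sum.inr '' (rightPart H).edgeSet := by
  ext e
  induction e using Sym2.ind with
  | _ u v =>
    constructor
    · intro h
      rw [SimpleGraph.Subgraph.mem_edgeSet] at h
      match u, v with
      | .inl u, .inl v => exact Or.inl ⟨s(u, v), h, rfl⟩
      | .inr u, .inr v => exact Or.inr ⟨s(u, v), h, rfl⟩
      | .inl u, .inr v => simpa using H.adj_sub h
      | .inr u, .inl v => simpa using H.adj_sub h
    · rintro (⟨e', he', heq⟩ | ⟨e', he', heq⟩) <;>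
      · induction e' using Sym2.ind with
        | _ a b =>
          rw [Sym2.map_pair_eq, Sym2.eq_iff] at heq
          rcases heq with ⟨rfl, rfl⟩ | ⟨rfl, rfl⟩
          · exact he'
          · exact (SimpleGraph.Subgraph.mem_edgeSet).mpr ((he' : _).symm)

lemma edgeSet_ncard (H : (G ⊕g (⊤ : SimpleGraph (Fin t))).Subgraph) :
    H.edgeSet.ncard = (leftPart H).edgeSet.ncard + (rightPart H).edgeSet.ncard := by
  rw [edgeSet_eq H, Set.ncard_union_eq ?_ (Set.toFinite _) (Set.toFinite _),
    Set.ncard_image_of_injective _ (Sym2.map.injective Sum.inl_injective),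
    Set.ncard_image_of_injective _ (Sym2.map.injective Sum.inr_injective)]
  rw [Set.disjoint_left]
  rintro e ⟨e₁, -, rfl⟩ ⟨e₂, -, h⟩
  induction e₁ using Sym2.ind with
  | _ a b =>
    induction e₂ using Sym2.ind with
    | _ c d =>
      rw [Sym2.map_pair_eq, Sym2.map_pair_eq, Sym2.eq_iff] at h
      rcases h with ⟨h, -⟩ | ⟨h, -⟩ <;> exact absurd h (by simp)

/-- A subgraph's coe edge set has the same size as its edge set. -/
lemma sub_edge_ncard {W : Type*} {Γ : SimpleGraph W} (K : Γ.Subgraph) :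
    K.coe.edgeSet.ncard = K.edgeSet.ncard := by
  rw [← K.image_coe_edgeSet_coe,
    Set.ncard_image_of_injective _ (Sym2.map.injective Subtype.val_injective)]

lemma left_colorable (H : (G ⊕g (⊤ : SimpleGraph (Fin t))).Subgraph)
    (hc : H.coe.Colorable 2) : (leftPart H).coe.Colorable 2 := by
  obtain ⟨C⟩ := hc
  exact ⟨C.comp ⟨fun x => ⟨.inl x.1, x.2⟩, fun {a b} h => h⟩⟩

lemma right_colorable (H : (G ⊕g (⊤ : SimpleGraph (Fin t))).Subgraph)
    (hc : H.coe.Colorable 2) : (rightPart H).coe.Colorable 2 := by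
  obtain ⟨C⟩ := hc
  exact ⟨C.comp ⟨fun x => ⟨.inr x.1, x.2⟩, fun {a b} h => h⟩⟩

lemma card_coe_set {W : Type*} (s : Set W) [Fintype ↥s] :
    Fintype.card ↥s = s.ncard := by
  rw [← Nat.card_eq_fintype_card, Nat.card_coe_set_eq]

lemma right_verts_le (H : (G ⊕g (⊤ : SimpleGraph (Fin t))).Subgraph) :
    (rightPart H).verts.ncard ≤ t := by
  have := Set.ncard_le_ncard (Set.subset_univ (rightPart H).verts) (Set.toFinite _)
  simpa [Set.ncard_univ] using this

end Aux

/-- If `G` satisfies both density conditions (so it lies in the subgraph-closed class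
`𝒢_{m₁,m₂}`), `m₁ ≤ 2m₂`, and `1 ≤ t ≤ ⌊2m₁⌋`, then the disjoint union `G ∪ K_t`
also satisfies both density conditions. -/
theorem stmt_3 {V : Type*} [Fintype V] (G : SimpleGraph V) (m₁ m₂ : ℝ)
    (h12 : m₁ ≤ 2 * m₂) (t : ℕ) (ht1 : 1 ≤ t) (ht2 : t ≤ ⌊2 * m₁⌋₊)
    (hdens₁ : ∀ H : G.Subgraph, (H.edgeSet.ncard : ℝ) ≤ m₁ * H.verts.ncard)
    (hdens₂ : ∀ H : G.Subgraph, H.coe.Colorable 2 →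
      (H.edgeSet.ncard : ℝ) ≤ m₂ * H.verts.ncard) :
    (∀ H : (G ⊕g (⊤ : SimpleGraph (Fin t))).Subgraph,
        (H.edgeSet.ncard : ℝ) ≤ m₁ * H.verts.ncard) ∧
    (∀ H : (G ⊕g (⊤ : SimpleGraph (Fin t))).Subgraph, H.coe.Colorable 2 →
        (H.edgeSet.ncard : ℝ) ≤ m₂ * H.verts.ncard) := by
  classical
  have hm1 : (1:ℝ) ≤ 2 * m₁ := by
    by_contra h
    push_neg at h
    have h0 : ⌊2 * m₁⌋₊ = 0 := Nat.floor_eq_zero.mpr h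
    omega
  have ht : (t:ℝ) ≤ 2 * m₁ :=
    le_trans (Nat.cast_le.mpr ht2) (Nat.floor_le (by linarith))
  refine ⟨fun H => ?_, fun H hc => ?_⟩
  · -- density 1
    have hs : ((rightPart H).verts.ncard : ℝ) ≤ 2 * m₁ :=
      le_trans (Nat.cast_le.mpr (right_verts_le H)) ht
    have hs0 : (0:ℝ) ≤ ((rightPart H).verts.ncard : ℝ) := Nat.cast_nonneg _
    rw [edgeSet_ncard H, verts_ncard H]
    push_cast
    have hL := hdens₁ (leftPart H)
    have hR := aux_complete (rightPart H).coe
    rw [sub_edge_ncard, card_coe_set] at hR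
    have hR' : 2 * ((rightPart H).edgeSet.ncard : ℝ) ≤
        ((rightPart H).verts.ncard : ℝ) * ((rightPart H).verts.ncard : ℝ) := by
      exact_mod_cast hR
    nlinarith
  · -- density 2
    have hs : ((rightPart H).verts.ncard : ℝ) ≤ 2 * m₁ :=
      le_trans (Nat.cast_le.mpr (right_verts_le H)) ht
    have hs0 : (0:ℝ) ≤ ((rightPart H).verts.ncard : ℝ) := Nat.cast_nonneg _
    rw [edgeSet_ncard H, verts_ncard H]
    push_cast
    have hL := hdens₂ (leftPart H) (left_colorable H hc)
    have hR := aux_bip (rightPart H).coe (right_colorable H hc)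
    rw [sub_edge_ncard, card_coe_set] at hR
    nlinarith
end

section
/- Let G be a d-degenerate graph with n = rs − t vertices where ⌊d⌋ < t ≤ r − 1 and r ≥ d + 1. If the subgraph H of G induced by the first r(s−1) vertices of a degeneracy ordering admits an equitable r-coloring with all color classes of size s−1, then this coloring can be greedily extended to an equitable r-coloring of the subgraph induced by the first r(s−1)+(r−t) vertices where the new vertices get pairwise distinct colors. -/
noncomputable def greedy (r s : ℕ) {n : ℕ} (G : SimpleGraph (Fin n)) [DecidableRel G.Adj]
    (c : Fin n → Fin r) (hr : 0 < r) (m : ℕ) : Fin r :=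
  if m < r * (s - 1) then
    if h : m < n then c ⟨m, h⟩ else ⟨0, hr⟩
  else
    let F : Finset (Fin r) :=
      (if h : m < n then
        ((Finset.univ.filter (fun j : Fin n => G.Adj ⟨m, h⟩ j ∧ (j : ℕ) < m)).attach.image
          (fun j => greedy r s G c hr j.1.val))
      else ∅) ∪
      ((Finset.Ico (r * (s - 1)) m).attach.image (fun j => greedy r s G c hr j.1))
    if hne : ((Finset.univ : Finset (Fin r)) \ F).Nonempty then
      ((Finset.univ : Finset (Fin r)) \ F).min' hne
    else ⟨0, hr⟩
termination_by m
decreasing_by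
  · exact (Finset.mem_filter.mp j.2).2.2
  · exact (Finset.mem_Ico.mp j.2).2

noncomputable def Fset (r s : ℕ) {n : ℕ} (G : SimpleGraph (Fin n)) [DecidableRel G.Adj]
    (c : Fin n → Fin r) (hr : 0 < r) (m : ℕ) : Finset (Fin r) :=
  (if h : m < n then
    ((Finset.univ.filter (fun j : Fin n => G.Adj ⟨m, h⟩ j ∧ (j : ℕ) < m)).attach.image
      (fun j => greedy r s G c hr j.1.val))
  else ∅) ∪
  ((Finset.Ico (r * (s - 1)) m).attach.image (fun j => greedy r s G c hr j.1))

lemma greedy_lt (r s : ℕ) {n : ℕ} (G : SimpleGraph (Fin n)) [DecidableRel G.Adj]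
    (c : Fin n → Fin r) (hr : 0 < r) (m : ℕ) (hm : m < r * (s - 1)) (h : m < n) :
    greedy r s G c hr m = c ⟨m, h⟩ := by
  rw [greedy]; simp [hm, h]

lemma greedy_eq (r s : ℕ) {n : ℕ} (G : SimpleGraph (Fin n)) [DecidableRel G.Adj]
    (c : Fin n → Fin r) (hr : 0 < r) (m : ℕ) (hm : ¬ m < r * (s - 1)) :
    greedy r s G c hr m =
      if hne : ((Finset.univ : Finset (Fin r)) \ Fset r s G c hr m).Nonempty then
        ((Finset.univ : Finset (Fin r)) \ Fset r s G c hr m).min' hne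
      else ⟨0, hr⟩ := by
  rw [greedy]; simp only [if_neg hm]; rfl

lemma greedy_not_mem (r s : ℕ) {n : ℕ} (G : SimpleGraph (Fin n)) [DecidableRel G.Adj]
    (c : Fin n → Fin r) (hr : 0 < r) (m : ℕ) (hm : ¬ m < r * (s - 1))
    (hcard : (Fset r s G c hr m).card < r) :
    greedy r s G c hr m ∉ Fset r s G c hr m := by
  have hu : ((Finset.univ : Finset (Fin r))).card = r := by simp
  have hne : ((Finset.univ : Finset (Fin r)) \ Fset r s G c hr m).Nonempty := by
    rw [← Finset.card_pos, Finset.card_sdiff_of_subset (Finset.subset_univ _)]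
    omega
  rw [greedy_eq r s G c hr m hm, dif_pos hne]
  have := Finset.min'_mem _ hne
  exact (Finset.mem_sdiff.mp this).2

lemma card_Fset_le (d r s : ℕ) {n : ℕ} (G : SimpleGraph (Fin n)) [DecidableRel G.Adj]
    (c : Fin n → Fin r) (hr : 0 < r) (m : ℕ)
    (hdegord : ∀ i : Fin n,
      (Finset.univ.filter (fun j : Fin n => G.Adj i j ∧ (j : ℕ) < (i : ℕ))).card ≤ d)
    (h : m < n) :
    (Fset r s G c hr m).card ≤ d + (m - r * (s - 1)) := by
  unfold Fset
  refine le_trans (Finset.card_union_le _ _) (add_le_add ?_ ?_)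
  · rw [dif_pos h]
    refine le_trans Finset.card_image_le ?_
    rw [Finset.card_attach]
    exact hdegord ⟨m, h⟩
  · refine le_trans Finset.card_image_le ?_
    rw [Finset.card_attach, Nat.card_Ico]

lemma nbr_mem_Fset (r s : ℕ) {n : ℕ} (G : SimpleGraph (Fin n)) [DecidableRel G.Adj]
    (c : Fin n → Fin r) (hr : 0 < r) (m : ℕ) (h : m < n) (v : Fin n)
    (hadj : G.Adj ⟨m, h⟩ v) (hv : (v : ℕ) < m) :
    greedy r s G c hr v.val ∈ Fset r s G c hr m := by
  apply Finset.mem_union_left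
  rw [dif_pos h]
  apply Finset.mem_image.mpr
  refine ⟨⟨v, ?_⟩, Finset.mem_attach _ _, rfl⟩
  simp [hadj, hv]

lemma prev_mem_Fset (r s : ℕ) {n : ℕ} (G : SimpleGraph (Fin n)) [DecidableRel G.Adj]
    (c : Fin n → Fin r) (hr : 0 < r) (m p : ℕ) (h1 : r * (s - 1) ≤ p) (h2 : p < m) :
    greedy r s G c hr p ∈ Fset r s G c hr m := by
  apply Finset.mem_union_right
  apply Finset.mem_image.mpr
  exact ⟨⟨p, Finset.mem_Ico.mpr ⟨h1, h2⟩⟩, Finset.mem_attach _ _, rfl⟩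

/-- Greedy extension step: let `G` be `d`-degenerate with `n = rs − t` vertices,
`d < t ≤ r − 1`, `r ≥ d + 1`, with a degeneracy ordering given by the natural order on
`Fin n`. If the subgraph induced by the first `r(s−1)` vertices has an equitable
`r`-coloring with all classes of size `s−1`, then this coloring extends to a proper
coloring of the first `r(s−1)+(r−t)` vertices in which the new vertices receive
pairwise distinct colors, and the resulting coloring is equitable. -/
theorem stmt_5 (d r s t n : ℕ) (hn : n = r * s - t) (hs : 1 ≤ s)
    (ht1 : d < t) (ht2 : t ≤ r - 1) (hr : d + 1 ≤ r)
    (G : SimpleGraph (Fin n)) [DecidableRel G.Adj]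
    (hdegord : ∀ i : Fin n,
      (Finset.univ.filter (fun j : Fin n => G.Adj i j ∧ (j : ℕ) < (i : ℕ))).card ≤ d)
    (c : Fin n → Fin r)
    (hproper : ∀ u v : Fin n, (u : ℕ) < r * (s - 1) → (v : ℕ) < r * (s - 1) →
      G.Adj u v → c u ≠ c v)
    (hsizes : ∀ i : Fin r,
      (Finset.univ.filter (fun v : Fin n => (v : ℕ) < r * (s - 1) ∧ c v = i)).card = s - 1) :
    ∃ c' : Fin n → Fin r,
      (∀ v : Fin n, (v : ℕ) < r * (s - 1) → c' v = c v) ∧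
      (∀ u v : Fin n, (u : ℕ) < r * (s - 1) + (r - t) → (v : ℕ) < r * (s - 1) + (r - t) →
        G.Adj u v → c' u ≠ c' v) ∧
      (∀ u v : Fin n, r * (s - 1) ≤ (u : ℕ) → (u : ℕ) < r * (s - 1) + (r - t) →
        r * (s - 1) ≤ (v : ℕ) → (v : ℕ) < r * (s - 1) + (r - t) → u ≠ v → c' u ≠ c' v) ∧
      (∀ i j : Fin r,
        (Finset.univ.filter
          (fun v : Fin n => (v : ℕ) < r * (s - 1) + (r - t) ∧ c' v = i)).card ≤
        (Finset.univ.filter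
          (fun v : Fin n => (v : ℕ) < r * (s - 1) + (r - t) ∧ c' v = j)).card + 1) := by
  have hr0 : 0 < r := by omega
  have hn' : n = r * (s - 1) + (r - t) := by
    obtain ⟨s', rfl⟩ : ∃ s', s = s' + 1 := ⟨s - 1, by omega⟩
    have h1 : r * (s' + 1) = r * s' + r := by ring
    have h2 : r * (s' + 1 - 1) = r * s' := by simp
    omega
  set c' : Fin n → Fin r := fun v => greedy r s G c hr0 v.val with hc'
  -- agreement on old vertices
  have hagree : ∀ v : Fin n, (v : ℕ) < r * (s - 1) → c' v = c v := by
    intro v hv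
    exact greedy_lt r s G c hr0 v.val hv v.isLt
  -- forbidden set is small for new vertices
  have hcard : ∀ m : ℕ, r * (s - 1) ≤ m → m < r * (s - 1) + (r - t) →
      (Fset r s G c hr0 m).card < r := by
    intro m h1 h2
    have hmn : m < n := by omega
    have hb := card_Fset_le d r s G c hr0 m hdegord hmn
    have e1 : m - r * (s - 1) < r - t := by omega
    omega
  -- key avoidance facts
  have hnbr : ∀ u v : Fin n, r * (s - 1) ≤ (u : ℕ) → (u : ℕ) < r * (s - 1) + (r - t) →
      (v : ℕ) < (u : ℕ) → G.Adj u v → c' u ≠ c' v := by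
    intro u v h1 h2 h3 hadj
    have hnm := greedy_not_mem r s G c hr0 u.val (by omega) (hcard u.val h1 h2)
    have hmem := nbr_mem_Fset r s G c hr0 u.val u.isLt v (by simpa using hadj) h3
    intro he
    have he' : greedy r s G c hr0 u.val = greedy r s G c hr0 v.val := he
    rw [← he'] at hmem
    exact hnm hmem
  have hprev : ∀ u v : Fin n, r * (s - 1) ≤ (u : ℕ) → (u : ℕ) < r * (s - 1) + (r - t) →
      r * (s - 1) ≤ (v : ℕ) → (v : ℕ) < (u : ℕ) → c' u ≠ c' v := by
    intro u v h1 h2 h3 h4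
    have hnm := greedy_not_mem r s G c hr0 u.val (by omega) (hcard u.val h1 h2)
    have hmem := prev_mem_Fset r s G c hr0 u.val v.val h3 h4
    intro he
    have he' : greedy r s G c hr0 u.val = greedy r s G c hr0 v.val := he
    rw [← he'] at hmem
    exact hnm hmem
  -- properness
  have hprop : ∀ u v : Fin n, (u : ℕ) < r * (s - 1) + (r - t) →
      (v : ℕ) < r * (s - 1) + (r - t) → G.Adj u v → c' u ≠ c' v := by
    have key : ∀ u v : Fin n, (u : ℕ) < r * (s - 1) + (r - t) →
        (v : ℕ) < (u : ℕ) → G.Adj u v → c' u ≠ c' v := by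
      intro u v hu hvu hadj
      rcases lt_or_ge (u : ℕ) (r * (s - 1)) with h | h
      · have hv : (v : ℕ) < r * (s - 1) := lt_trans hvu h
        rw [hagree u h, hagree v hv]
        exact hproper u v h hv hadj
      · exact hnbr u v h hu hvu hadj
    intro u v hu hv hadj
    rcases lt_trichotomy (v : ℕ) (u : ℕ) with h | h | h
    · exact key u v hu h hadj
    · exact absurd (Fin.ext h : v = u) (fun e => G.ne_of_adj hadj e.symm)
    · exact fun he => key v u hv h hadj.symm he.symm
  -- distinctness of new vertices
  have hdist : ∀ u v : Fin n, r * (s - 1) ≤ (u : ℕ) → (u : ℕ) < r * (s - 1) + (r - t) →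
      r * (s - 1) ≤ (v : ℕ) → (v : ℕ) < r * (s - 1) + (r - t) → u ≠ v → c' u ≠ c' v := by
    intro u v h1 h2 h3 h4 hne
    rcases lt_trichotomy (v : ℕ) (u : ℕ) with h | h | h
    · exact hprev u v h1 h2 h3 h
    · exact absurd (Fin.ext h : v = u).symm hne
    · exact fun he => hprev v u h3 h4 h1 h he.symm
  refine ⟨c', hagree, hprop, hdist, ?_⟩
  -- equitability
  intro i j
  have hB : ∀ i : Fin r,
      (Finset.univ.filter (fun v : Fin n => (v : ℕ) < r * (s - 1) ∧ c' v = i)).card = s - 1 := by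
    intro i
    refine Eq.trans ?_ (hsizes i)
    congr 1
    apply Finset.filter_congr
    intro x _
    constructor
    · rintro ⟨h1, h2⟩; exact ⟨h1, by rw [← hagree x h1]; exact h2⟩
    · rintro ⟨h1, h2⟩; exact ⟨h1, by rw [hagree x h1]; exact h2⟩
  have hN : ∀ i : Fin r,
      (Finset.univ.filter (fun v : Fin n => r * (s - 1) ≤ (v : ℕ) ∧
        (v : ℕ) < r * (s - 1) + (r - t) ∧ c' v = i)).card ≤ 1 := by
    intro i
    apply Finset.card_le_one.mpr
    intro a ha b hb
    simp only [Finset.mem_filter, Finset.mem_univ, true_and] at ha hb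
    by_contra hab
    exact hdist a b ha.1 ha.2.1 hb.1 hb.2.1 hab (ha.2.2.trans hb.2.2.symm)
  have hsplit : ∀ i : Fin r,
      (Finset.univ.filter (fun v : Fin n => (v : ℕ) < r * (s - 1) + (r - t) ∧ c' v = i)) ⊆
      (Finset.univ.filter (fun v : Fin n => (v : ℕ) < r * (s - 1) ∧ c' v = i)) ∪
      (Finset.univ.filter (fun v : Fin n => r * (s - 1) ≤ (v : ℕ) ∧
        (v : ℕ) < r * (s - 1) + (r - t) ∧ c' v = i)) := by
    intro i v hv
    simp only [Finset.mem_filter, Finset.mem_univ, true_and, Finset.mem_union] at hv ⊢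
    rcases lt_or_ge (v : ℕ) (r * (s - 1)) with h | h
    · exact Or.inl ⟨h, hv.2⟩
    · exact Or.inr ⟨h, hv.1, hv.2⟩
  have hup : (Finset.univ.filter
      (fun v : Fin n => (v : ℕ) < r * (s - 1) + (r - t) ∧ c' v = i)).card ≤ s := by
    refine le_trans (Finset.card_le_card (hsplit i)) (le_trans (Finset.card_union_le _ _) ?_)
    rw [hB i]
    have := hN i
    omega
  have hlo : (Finset.univ.filter (fun v : Fin n => (v : ℕ) < r * (s - 1) ∧ c' v = j)).card ≤
      (Finset.univ.filter
      (fun v : Fin n => (v : ℕ) < r * (s - 1) + (r - t) ∧ c' v = j)).card := by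
    apply Finset.card_le_card
    intro v hv
    simp only [Finset.mem_filter, Finset.mem_univ, true_and] at hv ⊢
    exact ⟨by omega, hv.2⟩
  have hBj := hB j
  omega
end

section
/- Let m₁, m₂ be positive reals with 1 ≤ m₁/m₂ ≤ 1.8, let β ∈ [0.5, 1) satisfy 2m₂(1−β)(1+β)² = m₁β(2+β), and set r₀ = 2m₁/(1−β) and a₀ = (r₀ − √(r₀² − 4m₂r₀))/2. Then (r₀ + √(r₀² − 4m₂r₀))/2 ≥ 2m₁. -/
/-- Under the standing hypotheses, `(r₀ + √(r₀² − 4m₂r₀))/2 ≥ 2m₁`. -/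
theorem stmt_7 (m₁ m₂ β r₀ a₀ : ℝ) (hm₁ : 0 < m₁) (hm₂ : 0 < m₂)
    (h1 : 1 ≤ m₁ / m₂) (h2 : m₁ / m₂ ≤ 1.8)
    (hβ : β ∈ Set.Ico (0.5 : ℝ) 1)
    (hroot : 2 * m₂ * (1 - β) * (1 + β) ^ 2 = m₁ * β * (2 + β))
    (hr₀ : r₀ = 2 * m₁ / (1 - β))
    (ha₀ : a₀ = (r₀ - Real.sqrt (r₀ ^ 2 - 4 * m₂ * r₀)) / 2) :
    (r₀ + Real.sqrt (r₀ ^ 2 - 4 * m₂ * r₀)) / 2 ≥ 2 * m₁ := by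
  obtain ⟨hβ1, hβ2⟩ := hβ
  have hb : (0:ℝ) < 1 - β := by linarith
  have hr : r₀ ≥ 4 * m₁ := by
    rw [hr₀, ge_iff_le, le_div_iff₀ hb]
    nlinarith
  have hs := Real.sqrt_nonneg (r₀ ^ 2 - 4 * m₂ * r₀)
  linarith
end

section
/- Let m₁, m₂ be positive reals with 1 ≤ m₁/m₂ ≤ 1.8, let β ∈ [0.5, 1) satisfy 2m₂(1−β)(1+β)² = m₁β(2+β), and set r₀ = 2m₁/(1−β) and a₀ = (r₀ − √(r₀² − 4m₂r₀))/2. Then (1 − β²)(r₀ − 2a₀) ≥ 2m₁. -/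
/-- Under the standing hypotheses, `(1 − β²)(r₀ − 2a₀) ≥ 2m₁`. -/
theorem stmt_9 (m₁ m₂ β r₀ a₀ : ℝ) (hm₁ : 0 < m₁) (hm₂ : 0 < m₂)
    (h1 : 1 ≤ m₁ / m₂) (h2 : m₁ / m₂ ≤ 1.8)
    (hβ : β ∈ Set.Ico (0.5 : ℝ) 1)
    (hroot : 2 * m₂ * (1 - β) * (1 + β) ^ 2 = m₁ * β * (2 + β))
    (hr₀ : r₀ = 2 * m₁ / (1 - β))
    (ha₀ : a₀ = (r₀ - Real.sqrt (r₀ ^ 2 - 4 * m₂ * r₀)) / 2) :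
    (1 - β ^ 2) * (r₀ - 2 * a₀) ≥ 2 * m₁ := by
  obtain ⟨hβ0, hβ1⟩ := hβ
  norm_num at hβ0
  have h1b : (0:ℝ) < 1 - β := by linarith
  have h1b' : (1:ℝ) - β ≠ 0 := ne_of_gt h1b
  have hr : r₀ * (1 - β) = 2 * m₁ := by
    rw [hr₀]; field_simp
  have hr0pos : 0 < r₀ := by nlinarith
  -- key algebraic identity
  have haux : β * (2 + β) * r₀ = 4 * m₂ * (1 + β) ^ 2 := by
    have h := hroot
    have : (β * (2 + β) * r₀ - 4 * m₂ * (1 + β) ^ 2) * (1 - β) = 0 := by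
      linear_combination β * (2 + β) * hr - 2 * hroot
    rcases mul_eq_zero.mp this with h' | h'
    · linarith
    · exact absurd h' h1b'
  have hnn : (0:ℝ) ≤ r₀ ^ 2 - 4 * m₂ * r₀ := by
    have hβpos : 0 < β := by linarith
    nlinarith [sq_nonneg (1 + β), mul_pos hβpos hr0pos]
  set s := Real.sqrt (r₀ ^ 2 - 4 * m₂ * r₀) with hs
  have hs2 : s ^ 2 = r₀ ^ 2 - 4 * m₂ * r₀ := Real.sq_sqrt hnn
  have hsnn : 0 ≤ s := Real.sqrt_nonneg _
  have hsq : ((1 + β) * s) ^ 2 = r₀ ^ 2 := by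
    linear_combination (1 + β) ^ 2 * hs2 + r₀ * haux
  have hkey : (1 + β) * s = r₀ := by
    have hfac : ((1 + β) * s - r₀) * ((1 + β) * s + r₀) = 0 := by
      linear_combination hsq
    rcases mul_eq_zero.mp hfac with h' | h'
    · linarith
    · nlinarith
  have hra : r₀ - 2 * a₀ = s := by rw [ha₀]; ring
  have : (1 - β ^ 2) * (r₀ - 2 * a₀) = 2 * m₁ := by
    rw [hra]
    linear_combination (1 - β) * hkey + hr
  linarith
end

section
/- For β ∈ [0.5, 1) and positive reals m₁, m₂ with 2(1−β)(1+β)²/(β(β+2)) ≥ m₁/m₂, one has 4(1+β)²m₂/(β² + 2β) ≥ 2m₂ + 2√(m₂² + m₁²/(1−β²)²). -/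
/-- For `β ∈ [0.5, 1)` and positive reals `m₁, m₂` with
`2(1−β)(1+β)²/(β(β+2)) ≥ m₁/m₂`, one has
`4(1+β)²m₂/(β² + 2β) ≥ 2m₂ + 2√(m₂² + m₁²/(1−β²)²)`. -/
theorem stmt_13 (m₁ m₂ β : ℝ) (hm₁ : 0 < m₁) (hm₂ : 0 < m₂)
    (hβ : β ∈ Set.Ico (0.5 : ℝ) 1)
    (h : 2 * (1 - β) * (1 + β) ^ 2 / (β * (β + 2)) ≥ m₁ / m₂) :
    4 * (1 + β) ^ 2 * m₂ / (β ^ 2 + 2 * β) ≥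
      2 * m₂ + 2 * Real.sqrt (m₂ ^ 2 + m₁ ^ 2 / (1 - β ^ 2) ^ 2) := by
  obtain ⟨hb1, hb2⟩ := hβ
  have hbpos : (0:ℝ) < β := by linarith
  have hd : (0:ℝ) < β * (β + 2) := by nlinarith
  have hd2 : (0:ℝ) < β ^ 2 + 2 * β := by nlinarith
  have h1b : (0:ℝ) < 1 - β ^ 2 := by nlinarith
  -- hypothesis cleared of denominators
  have hm : m₁ * (β * (β + 2)) ≤ 2 * (1 - β) * (1 + β) ^ 2 * m₂ := by
    rw [ge_iff_le, div_le_div_iff₀ hm₂ hd] at h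
    linarith
  have hstep : m₁ ^ 2 / (1 - β ^ 2) ^ 2 ≤ 4 * (1 + β) ^ 2 * m₂ ^ 2 / (β ^ 2 + 2 * β) ^ 2 := by
    rw [div_le_div_iff₀ (by positivity) (by positivity)]
    nlinarith [mul_le_mul hm hm (by positivity) (by nlinarith), sq_nonneg m₁, sq_nonneg m₂]
  have hkey : Real.sqrt (m₂ ^ 2 + m₁ ^ 2 / (1 - β ^ 2) ^ 2)
      ≤ m₂ * (β ^ 2 + 2 * β + 2) / (β ^ 2 + 2 * β) := by
    have hrhs : (0:ℝ) ≤ m₂ * (β ^ 2 + 2 * β + 2) / (β ^ 2 + 2 * β) :=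
      div_nonneg (by nlinarith) hd2.le
    rw [show m₂ * (β ^ 2 + 2 * β + 2) / (β ^ 2 + 2 * β)
        = Real.sqrt ((m₂ * (β ^ 2 + 2 * β + 2) / (β ^ 2 + 2 * β)) ^ 2) from
      (Real.sqrt_sq hrhs).symm]
    apply Real.sqrt_le_sqrt
    have heq2 : (m₂ * (β ^ 2 + 2 * β + 2) / (β ^ 2 + 2 * β)) ^ 2
        = m₂ ^ 2 + 4 * (1 + β) ^ 2 * m₂ ^ 2 / (β ^ 2 + 2 * β) ^ 2 := by
      field_simp
      ring
    rw [heq2]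
    linarith
  have heq : 4 * (1 + β) ^ 2 * m₂ / (β ^ 2 + 2 * β)
      = 2 * m₂ + 2 * (m₂ * (β ^ 2 + 2 * β + 2) / (β ^ 2 + 2 * β)) := by
    field_simp
    ring
  rw [heq]
  linarith
end

section
/- Let H be a graph whose vertex set is partitioned into r independent sets, of which a of them (class set 𝒜, union A with |A| = as − 1) and b = r − a of them (class set ℬ, union B with |B| = bs) satisfy: every vertex of B has at least one neighbor in each class of 𝒜. If every bipartite subgraph H' of H satisfies e(H') ≤ m₂·v(H'), then a(r−a)s < m₂·r·s, and hence a² − ra + m₂r > 0. -/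
/-- Let `H` be a graph on `rs − 1` vertices partitioned into `r` independent classes,
`a` of which (with union `A`, `|A| = as − 1`) are such that every vertex of the union
`B` of the other `b = r − a` classes (`|B| = bs`) has at least one neighbor in each of
them. If every bipartite subgraph `H'` of `H` satisfies `e(H') ≤ m₂·v(H')`, then
`a(r−a)s < m₂rs`, and hence `a² − ra + m₂r > 0`. -/
theorem stmt_14 {V : Type*} [Fintype V] [DecidableEq V] (H : SimpleGraph V)
    [DecidableRel H.Adj] (r s a : ℕ) (m₂ : ℝ) (hm₂ : 0 < m₂)
    (hs : 1 ≤ s) (ha : 1 ≤ a) (har : a < r)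
    (hcard : Fintype.card V = r * s - 1)
    (P : Fin r → Finset V)
    (hdisj : ∀ i j, i ≠ j → Disjoint (P i) (P j))
    (hcover : Finset.univ.biUnion P = Finset.univ)
    (hind : ∀ i, ∀ u ∈ P i, ∀ v ∈ P i, ¬ H.Adj u v)
    (A B : Finset V)
    (hA : A = (Finset.univ.filter (fun i : Fin r => (i : ℕ) < a)).biUnion P)
    (hB : B = (Finset.univ.filter (fun i : Fin r => a ≤ (i : ℕ))).biUnion P)
    (hAcard : A.card = a * s - 1) (hBcard : B.card = (r - a) * s)
    (hnb : ∀ v ∈ B, ∀ i : Fin r, (i : ℕ) < a → ∃ u ∈ P i, H.Adj v u)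
    (hbip : ∀ H' : H.Subgraph, H'.coe.Colorable 2 →
      (H'.edgeSet.ncard : ℝ) ≤ m₂ * H'.verts.ncard) :
    (a : ℝ) * ((r : ℝ) - a) * s < m₂ * r * s ∧
    (a : ℝ) ^ 2 - r * a + m₂ * r > 0 := by
  classical
  -- membership facts
  have hPA : ∀ i : Fin r, (i : ℕ) < a → P i ⊆ A := by
    intro i hi x hx
    rw [hA]
    exact Finset.mem_biUnion.mpr ⟨i, Finset.mem_filter.mpr ⟨Finset.mem_univ _, hi⟩, hx⟩
  have hABdisj : ∀ x, x ∈ A → x ∈ B → False := by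
    intro x hxA hxB
    rw [hA] at hxA; rw [hB] at hxB
    obtain ⟨i, hi, hxi⟩ := Finset.mem_biUnion.mp hxA
    obtain ⟨j, hj, hxj⟩ := Finset.mem_biUnion.mp hxB
    have hi' := (Finset.mem_filter.mp hi).2
    have hj' := (Finset.mem_filter.mp hj).2
    have : i ≠ j := by
      intro h; subst h; omega
    exact Finset.disjoint_left.mp (hdisj i j this) hxi hxj
  -- bipartite subgraph
  set H' : H.Subgraph :=
    { verts := Set.univ
      Adj := fun u v => H.Adj u v ∧ ((u ∈ A ∧ v ∈ B) ∨ (u ∈ B ∧ v ∈ A))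
      adj_sub := fun h => h.1
      edge_vert := fun _ => Set.mem_univ _
      symm := by
        constructor
        intro u v h
        exact ⟨h.1.symm, h.2.elim (fun h => Or.inr ⟨h.2, h.1⟩) (fun h => Or.inl ⟨h.2, h.1⟩)⟩ }
    with hH'
  have hcol : H'.coe.Colorable 2 := by
    refine ⟨SimpleGraph.Coloring.mk (fun v => if (v : V) ∈ A then 0 else 1) ?_⟩
    intro u v huv
    have h2 : ((u : V) ∈ A ∧ (v : V) ∈ B) ∨ ((u : V) ∈ B ∧ (v : V) ∈ A) := huv.2
    rcases h2 with ⟨h1, h2⟩ | ⟨h1, h2⟩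
    · have : (v : V) ∉ A := fun hv => hABdisj _ hv h2
      simp [h1, this]
    · have : (u : V) ∉ A := fun hu => hABdisj _ hu h1
      simp [h2, this]
  -- the neighbor-choosing function
  have hgex : ∀ v ∈ B, ∀ i : ℕ, ∀ hi : i < a, ∃ w, w ∈ P ⟨i, hi.trans har⟩ ∧ H.Adj v w := by
    intro v hv i hi
    obtain ⟨u, hu, hadj⟩ := hnb v hv ⟨i, hi.trans har⟩ hi
    exact ⟨u, hu, hadj⟩
  set g : V → ℕ → V := fun v i =>
    if h : ∃ hi : i < r, ∃ w, w ∈ P ⟨i, hi⟩ ∧ H.Adj v w then h.choose_spec.choose else v with hg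
  have hgspec : ∀ v ∈ B, ∀ i, ∀ hi : i < a, g v i ∈ P ⟨i, hi.trans har⟩ ∧ H.Adj v (g v i) := by
    intro v hv i hi
    have hir : i < r := hi.trans har
    have hex : ∃ hi : i < r, ∃ w, w ∈ P ⟨i, hi⟩ ∧ H.Adj v w := ⟨hir, hgex v hv i hi⟩
    rw [hg]
    simp only [hex, dif_pos]
    exact hex.choose_spec.choose_spec
  -- edge count lower bound
  have hfin : H'.edgeSet.Finite := Set.toFinite _
  set f : V × ℕ → Sym2 V := fun p => s(p.1, g p.1 p.2) with hf
  have hmaps : ∀ p ∈ B ×ˢ Finset.range a, f p ∈ hfin.toFinset := by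
    rintro ⟨v, i⟩ hp
    rw [Finset.mem_product, Finset.mem_range] at hp
    obtain ⟨hw, hadj⟩ := hgspec v hp.1 i hp.2
    have hwa : g v i ∈ A := hPA _ hp.2 hw
    rw [Set.Finite.mem_toFinset]
    show H'.Adj v (g v i)
    exact ⟨hadj, Or.inr ⟨hp.1, hwa⟩⟩
  have hinj : Set.InjOn f ↑(B ×ˢ Finset.range a) := by
    rintro ⟨v, i⟩ hp ⟨v', i'⟩ hq he
    rw [Finset.mem_coe, Finset.mem_product, Finset.mem_range] at hp hq
    obtain ⟨hvB, hi⟩ := hp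
    obtain ⟨hvB', hi'⟩ := hq
    obtain ⟨hw, _⟩ := hgspec v hvB i hi
    obtain ⟨hw', _⟩ := hgspec v' hvB' i' hi'
    have hwa : g v i ∈ A := hPA _ hi hw
    have hwa' : g v' i' ∈ A := hPA _ hi' hw'
    rw [hf] at he
    simp only [Sym2.eq_iff] at he
    rcases he with ⟨h1, h2⟩ | ⟨h1, h2⟩
    · -- v = v', g v i = g v' i'
      have : (⟨i, hi.trans har⟩ : Fin r) = ⟨i', hi'.trans har⟩ := by
        by_contra hne
        exact Finset.disjoint_left.mp (hdisj _ _ hne) hw (h2 ▸ hw')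
      simp only [Fin.mk.injEq] at this
      exact Prod.ext h1 this
    · exact absurd (h1 ▸ hwa') (fun h => hABdisj _ h hvB)
  have hcount : B.card * a ≤ H'.edgeSet.ncard := by
    have := Finset.card_le_card_of_injOn f hmaps hinj
    rw [Finset.card_product, Finset.card_range] at this
    rwa [Set.ncard_eq_toFinset_card _ hfin]
  -- apply the hypothesis
  have hverts : H'.verts.ncard = r * s - 1 := by
    rw [hH']
    simp [Set.ncard_univ, Nat.card_eq_fintype_card, hcard]
  have hle := hbip H' hcol
  rw [hverts] at hle
  have hrs1 : (1 : ℕ) ≤ r * s := Nat.one_le_iff_ne_zero.mpr (by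
    have : 1 ≤ r := le_of_lt (lt_of_le_of_lt ha har) |>.trans (le_refl r)
    positivity)
  have hcast : ((r * s - 1 : ℕ) : ℝ) = (r : ℝ) * s - 1 := by
    push_cast [Nat.cast_sub hrs1]; ring
  have hBval : ((B.card * a : ℕ) : ℝ) = (a : ℝ) * ((r : ℝ) - a) * s := by
    rw [hBcard]
    push_cast [Nat.cast_sub har.le]
    ring
  have key : (a : ℝ) * ((r : ℝ) - a) * s < m₂ * r * s := by
    have h1 : ((B.card * a : ℕ) : ℝ) ≤ (H'.edgeSet.ncard : ℝ) := Nat.cast_le.mpr hcount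
    have h2 : m₂ * ((r * s - 1 : ℕ) : ℝ) < m₂ * ((r : ℝ) * s) := by
      rw [hcast]
      have hr0 : (0:ℝ) < (r:ℝ) := by exact_mod_cast lt_of_le_of_lt (Nat.zero_le a) har
      have hs0 : (0:ℝ) < (s:ℝ) := by exact_mod_cast hs
      have : (0:ℝ) < (r:ℝ) * s := mul_pos hr0 hs0
      nlinarith
    calc (a : ℝ) * ((r : ℝ) - a) * s = ((B.card * a : ℕ) : ℝ) := hBval.symm
      _ ≤ (H'.edgeSet.ncard : ℝ) := h1
      _ ≤ m₂ * ((r * s - 1 : ℕ) : ℝ) := hle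
      _ < m₂ * ((r : ℝ) * s) := h2
      _ = m₂ * r * s := by ring
  refine ⟨key, ?_⟩
  have hs' : (0:ℝ) < (s:ℝ) := by exact_mod_cast hs
  have : (a : ℝ) * ((r : ℝ) - a) < m₂ * r := by
    have := key
    nlinarith
  nlinarith
end

section
/- Let r₀, m₂, a₀ be reals with a₀ = (r₀ − √(r₀² − 4m₂r₀))/2, r₀² ≥ 4m₂r₀, r₀ ≥ 3a₀ + 1, and a₀ > m₂. If an integer z satisfies ⌊a₀⌋ + 1 ≤ z ≤ r − ⌊a₀⌋ − 1 for some real r ≥ r₀ and z² − rz + m₂r > 0, then a contradiction follows; equivalently, no integer z in [⌊a₀⌋+1, r−⌊a₀⌋−1] satisfies (r−z)z < m₂r. -/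
/-- Let `a₀ = (r₀ − √(r₀² − 4m₂r₀))/2` with `r₀² ≥ 4m₂r₀`, `r₀ ≥ 3a₀ + 1` and `a₀ > m₂`.
Then for every real `r ≥ r₀`, no integer `z` with `⌊a₀⌋ + 1 ≤ z ≤ r − ⌊a₀⌋ − 1`
satisfies `(r − z)z < m₂r`. -/
theorem stmt_15 (r₀ m₂ a₀ r : ℝ) (hm₂ : 0 < m₂)
    (ha₀ : a₀ = (r₀ - Real.sqrt (r₀ ^ 2 - 4 * m₂ * r₀)) / 2)
    (hdisc : 4 * m₂ * r₀ ≤ r₀ ^ 2) (h3 : 3 * a₀ + 1 ≤ r₀) (ham : m₂ < a₀)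
    (hr : r₀ ≤ r) :
    ∀ z : ℤ, ((⌊a₀⌋ : ℝ) + 1 ≤ (z : ℝ)) → ((z : ℝ) ≤ r - (⌊a₀⌋ : ℝ) - 1) →
      ¬ ((r - (z : ℝ)) * (z : ℝ) < m₂ * r) := by
  intro z hz1 hz2 hlt
  have hs : Real.sqrt (r₀ ^ 2 - 4 * m₂ * r₀) ^ 2 = r₀ ^ 2 - 4 * m₂ * r₀ :=
    Real.sq_sqrt (by linarith)
  have hroot : a₀ ^ 2 - r₀ * a₀ + m₂ * r₀ = 0 := by
    subst ha₀; nlinarith [hs]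
  have hfloor : (⌊a₀⌋ : ℝ) ≤ a₀ := Int.floor_le a₀
  have hfloor' : a₀ < (⌊a₀⌋ : ℝ) + 1 := Int.lt_floor_add_one a₀
  have hza : a₀ ≤ (z : ℝ) := by linarith
  have hzb : (z : ℝ) ≤ r - a₀ := by linarith
  have hsand : ((z : ℝ) - a₀) * ((z : ℝ) - (r - a₀)) ≤ 0 :=
    mul_nonpos_of_nonneg_of_nonpos (by linarith) (by linarith)
  nlinarith [mul_nonneg (sub_nonneg.2 hr) (sub_nonneg.2 ham.le)]
end
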